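/- Let (X, μ) be a standard Borel probability space and let R be a countable pmp equivalence relation on X which is strongly ergodic. Then for any sequence of measurable functions fₙ : X → ℂ with |fₙ| ≤ 1 μ-a.e. and ∫ |fₙ(φ(x)) − fₙ(x)|² dμ(x) → 0 as n → ∞ for every φ ∈ [R], one has ∫ |fₙ(x) − ∫ fₙ dμ|² dμ(x) → 0 as n → ∞. -/

import Mathlib

open MeasureTheory Filter Topology

/-- `φ` is an element of the full group `[R]`: a bimeasurable bijection of `X` whose graph is
contained in `R`. -/
def IsFullGroupElement {X : Type*} [MeasurableSpace X] (R : X → X → Prop) (φ : X ≃ X) : Prop :=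
  Measurable φ ∧ Measurable φ.symm ∧ ∀ x, R x (φ x)

open Set

lemma exists_good_cut {X : Type*} [MeasurableSpace X] (μ : Measure X) [IsProbabilityMeasure μ]
    (h : X → ℝ) (hm : Measurable h) (hb : ∀ x, -1 ≤ h x ∧ h x ≤ 1)
    {ε : ℝ} (hε : 0 < ε)
    (hvar : ε ≤ ∫ x, (h x - ∫ y, h y ∂μ) ^ 2 ∂μ) :
    ∃ t : ℝ,
      ENNReal.ofReal (ε / 16) ≤ μ {x | t < h x} ∧
      μ {x | t < h x} ≤ 1 - ENNReal.ofReal (ε / 8) ∧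
      ∀ k : ℕ, μ {x | t - (4:ℝ)⁻¹ ^ (k+1) < h x ∧ h x ≤ t + (4:ℝ)⁻¹ ^ (k+1)}
        ≤ ENNReal.ofReal (16 / ε * (2:ℝ)⁻¹ ^ k) := by
  set m : ℝ := ∫ y, h y ∂μ with hm_def
  have hint : ∀ (u : X → ℝ) (C : ℝ), Measurable u → (∀ x, |u x| ≤ C) → Integrable u μ :=
    fun u C hu hbu => ⟨hu.aestronglyMeasurable,
      HasFiniteIntegral.of_bounded (C := C) (ae_of_all _ (fun x => by simpa using hbu x))⟩
  have hb1 : ∀ x, |h x| ≤ 1 := fun x => abs_le.2 ⟨(hb x).1, (hb x).2⟩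
  have hm1 : |m| ≤ 1 := by
    have := norm_integral_le_of_norm_le_const (μ := μ) (f := h) (C := 1)
      (ae_of_all _ (fun x => by simpa using hb1 x))
    simpa using this
  have hhm2 : ∀ x, |h x - m| ≤ 2 := fun x => by
    have := hb1 x; rw [abs_le] at *; constructor <;> [linarith [this.1]; linarith [this.2]]
  -- positive/negative parts
  set p : X → ℝ := fun x => max (h x - m) 0 with hp_def
  set q : X → ℝ := fun x => max (m - h x) 0 with hq_def
  have hp_meas : Measurable p := (hm.sub measurable_const).max measurable_const
  have hq_meas : Measurable q := (measurable_const.sub hm).max measurable_const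
  have hp_bd : ∀ x, |p x| ≤ 2 := fun x => by
    have h2 := hhm2 x; rw [abs_le] at h2 ⊢
    exact ⟨le_trans (by norm_num) (le_max_right _ _), max_le h2.2 (by norm_num)⟩
  have hq_bd : ∀ x, |q x| ≤ 2 := fun x => by
    have h2 := hhm2 x; rw [abs_le] at h2 ⊢
    exact ⟨le_trans (by norm_num) (le_max_right _ _), max_le (by linarith [h2.1]) (by norm_num)⟩
  have hp_int : Integrable p μ := hint p 2 hp_meas hp_bd
  have hq_int : Integrable q μ := hint q 2 hq_meas hq_bd
  set A : ℝ := ∫ x, p x ∂μ with hA_def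
  have hPN : A = ∫ x, q x ∂μ := by
    have h1 : ∫ x, (p x - q x) ∂μ = A - ∫ x, q x ∂μ := integral_sub hp_int hq_int
    have h2 : ∀ x, p x - q x = h x - m := fun x => by
      simp only [hp_def, hq_def]
      rcases le_total (h x) m with hc | hc
      · rw [max_eq_right (sub_nonpos.2 hc), max_eq_left (sub_nonneg.2 hc)]; ring
      · rw [max_eq_left (sub_nonneg.2 hc), max_eq_right (sub_nonpos.2 hc)]; ring
    have h3 : ∫ x, (h x - m) ∂μ = 0 := by
      rw [integral_sub (hint h 1 hm hb1) (integrable_const m)]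
      simp [hm_def]
    rw [integral_congr_ae (ae_of_all _ h2), h3] at h1
    linarith
  have habs : ∀ x, |h x - m| = p x + q x := fun x => by
    simp only [hp_def, hq_def]
    rcases le_total (h x) m with hc | hc
    · rw [abs_of_nonpos (by linarith), max_eq_right (sub_nonpos.2 hc),
        max_eq_left (sub_nonneg.2 hc)]; ring
    · rw [abs_of_nonneg (by linarith), max_eq_left (sub_nonneg.2 hc),
        max_eq_right (sub_nonpos.2 hc)]; ring
  have hA4 : ε / 4 ≤ A := by
    have hsq : ∀ x, (h x - m) ^ 2 ≤ 2 * |h x - m| := fun x => by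
      have h2 := hhm2 x
      nlinarith [sq_abs (h x - m), abs_nonneg (h x - m)]
    have h1 : ∫ x, (h x - m) ^ 2 ∂μ ≤ ∫ x, 2 * |h x - m| ∂μ := by
      refine integral_mono (hint _ 4 ((hm.sub measurable_const).pow_const 2)
        (fun x => ?_)) ((hint _ 2 (hm.sub measurable_const).abs (fun x => by
          simpa using hhm2 x)).const_mul 2) hsq
      have h2 := hhm2 x
      rw [abs_le]
      constructor <;> nlinarith [sq_abs (h x - m), abs_nonneg (h x - m), sq_nonneg (h x - m)]
    have h2 : ∫ x, 2 * |h x - m| ∂μ = 2 * ∫ x, |h x - m| ∂μ := integral_const_mul 2 _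
    have h3 : ∫ x, |h x - m| ∂μ = A + ∫ x, q x ∂μ := by
      rw [integral_congr_ae (ae_of_all _ habs), integral_add hp_int hq_int]
    rw [h2, h3, ← hPN] at h1
    linarith
  -- the set where h ≤ m has measure at least ε/8
  have hSmeas : MeasurableSet {x | h x ≤ m} := measurableSet_le hm measurable_const
  have hS : ENNReal.ofReal (ε / 8) ≤ μ {x | h x ≤ m} := by
    have hle : ∀ x, q x ≤ Set.indicator {x | h x ≤ m} (fun _ => (2:ℝ)) x := fun x => by
      by_cases hc : h x ≤ m
      · have hx' : x ∈ {x | h x ≤ m} := hc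
        rw [Set.indicator_of_mem hx']
        have h2 := hhm2 x; rw [abs_le] at h2
        simp only [hq_def]; rw [max_le_iff]; exact ⟨by linarith [h2.1], by norm_num⟩
      · have hx' : x ∉ {x | h x ≤ m} := hc
        rw [Set.indicator_of_notMem hx']
        simp only [hq_def]
        rw [max_le_iff]
        push_neg at hc
        exact ⟨by linarith, le_refl 0⟩
    have h1 : ∫ x, q x ∂μ ≤ ∫ x, Set.indicator {x | h x ≤ m} (fun _ => (2:ℝ)) x ∂μ := by
      refine integral_mono hq_int ?_ hle
      exact (integrable_const (2:ℝ)).indicator hSmeas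
    rw [integral_indicator_const (2:ℝ) hSmeas] at h1
    rw [← hPN] at h1
    have : ε / 8 ≤ (μ {x | h x ≤ m}).toReal := by
      simp only [smul_eq_mul] at h1
      rw [measureReal_def] at h1
      linarith
    exact ENNReal.ofReal_le_of_le_toReal this
  -- Tonelli: the integral over cut levels s of μ{h > m+s} equals A
  set ν : Measure ℝ := volume.restrict (Ioc (0:ℝ) 2) with hν_def
  have hS1 : MeasurableSet {p : ℝ × X | m + p.1 < h p.2} :=
    measurableSet_lt (measurable_const.add measurable_fst) (hm.comp measurable_snd)
  have hD1 : (ν.prod μ) {p : ℝ × X | m + p.1 < h p.2}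
      = ∫⁻ s in Ioc (0:ℝ) 2, μ {x | m + s < h x} ∂volume := by
    rw [Measure.prod_apply hS1]; rfl
  have hD2 : (ν.prod μ) {p : ℝ × X | m + p.1 < h p.2} = ENNReal.ofReal A := by
    rw [Measure.prod_apply_symm hS1]
    have hsec : ∀ x, ν ((fun s => (s, x)) ⁻¹' {p : ℝ × X | m + p.1 < h p.2})
        = ENNReal.ofReal (p x) := by
      intro x
      have hpre : ((fun s => (s, x)) ⁻¹' {p : ℝ × X | m + p.1 < h p.2}) = Iio (h x - m) := by
        ext s; simp only [mem_preimage, mem_setOf_eq, mem_Iio]; constructor <;> intro hs <;> linarith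
      rw [hpre, hν_def, Measure.restrict_apply measurableSet_Iio]
      have hd2 : h x - m ≤ 2 := by have := hb1 x; rw [abs_le] at this hm1; linarith [this.2, hm1.1]
      rcases le_or_gt (h x - m) 0 with hd | hd
      · have hemp : Iio (h x - m) ∩ Ioc (0:ℝ) 2 = ∅ := by
          ext s; simp only [mem_inter_iff, mem_Iio, mem_Ioc, mem_empty_iff_false, iff_false]
          rintro ⟨h1, h2, _⟩; linarith
        rw [hemp]
        simp [hp_def, max_eq_right hd]
      · have heq : Iio (h x - m) ∩ Ioc (0:ℝ) 2 = Ioo 0 (h x - m) := by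
          ext s; simp only [mem_inter_iff, mem_Iio, mem_Ioc, mem_Ioo]
          constructor
          · rintro ⟨h1, h2, _⟩; exact ⟨h2, h1⟩
          · rintro ⟨h1, h2⟩; exact ⟨h2, h1, by linarith⟩
        rw [heq, Real.volume_Ioo]
        simp only [hp_def]
        rw [max_eq_left hd.le]
        norm_num
    rw [lintegral_congr hsec]
    exact (ofReal_integral_eq_lintegral_ofReal hp_int
      (ae_of_all _ fun x => le_max_right _ _)).symm
  have hD : ENNReal.ofReal (ε/4) ≤ ∫⁻ s in Ioc (0:ℝ) 2, μ {x | m + s < h x} ∂volume := by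
    rw [← hD1, hD2]
    exact ENNReal.ofReal_le_ofReal hA4
  -- the good set G of cut levels
  set G : Set ℝ := {s | s ∈ Ioc (0:ℝ) 2 ∧ ENNReal.ofReal (ε/16) ≤ μ {x | m + s < h x}} with hG_def
  have hant : Antitone (fun s : ℝ => μ {x | m + s < h x}) := by
    intro s s' hss'
    exact measure_mono (fun x hx => lt_of_le_of_lt (by linarith : m + s ≤ m + s') hx)
  have hGm : MeasurableSet G := by
    have : G = Ioc (0:ℝ) 2 ∩ (fun s : ℝ => μ {x | m + s < h x}) ⁻¹' (Ici (ENNReal.ofReal (ε/16))) := rfl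
    rw [this]
    exact measurableSet_Ioc.inter (hant.measurable measurableSet_Ici)
  have hGvol : ENNReal.ofReal (ε/8) ≤ volume G := by
    have hle : ∫⁻ s in Ioc (0:ℝ) 2, μ {x | m + s < h x} ∂volume
        ≤ ∫⁻ s in Ioc (0:ℝ) 2, (G.indicator (fun _ => 1) s + ENNReal.ofReal (ε/16)) ∂volume := by
      refine setLIntegral_mono ((measurable_one.indicator hGm).add measurable_const) fun s hs => ?_
      by_cases hsG : s ∈ G
      · rw [Set.indicator_of_mem hsG]
        exact le_add_right prob_le_one
      · rw [Set.indicator_of_notMem hsG]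
        rw [zero_add]
        have : ¬ ENNReal.ofReal (ε/16) ≤ μ {x | m + s < h x} := fun hcon => hsG ⟨hs, hcon⟩
        exact (not_le.1 this).le
    have hrhs : ∫⁻ s in Ioc (0:ℝ) 2, (G.indicator (fun _ => 1) s + ENNReal.ofReal (ε/16)) ∂volume
        = volume G + ENNReal.ofReal (ε/8) := by
      rw [lintegral_add_right _ measurable_const, lintegral_indicator hGm, setLIntegral_one,
        lintegral_const, Measure.restrict_apply hGm, Measure.restrict_apply_univ]
      have hGsub : G ∩ Ioc (0:ℝ) 2 = G := inter_eq_self_of_subset_left (fun s hs => hs.1)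
      rw [hGsub, Real.volume_Ioc]
      congr 1
      rw [← ENNReal.ofReal_mul (by positivity)]
      congr 1
      ring
    have hcomb := le_trans hD (le_trans hle (le_of_eq hrhs))
    have h1 : ENNReal.ofReal (ε/4) - ENNReal.ofReal (ε/8) ≤ volume G :=
      tsub_le_iff_right.2 hcomb
    rwa [← ENNReal.ofReal_sub _ (by positivity), show ε/4 - ε/8 = ε/8 by ring] at h1
  -- bands and bad sets
  set Bnd : ℕ → ℝ → ENNReal := fun k s =>
    μ {x | m + s - (4:ℝ)⁻¹^(k+1) < h x ∧ h x ≤ m + s + (4:ℝ)⁻¹^(k+1)} with hBnd_def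
  have hr_pos : ∀ k : ℕ, (0:ℝ) < (4:ℝ)⁻¹^(k+1) := fun k => by positivity
  have hBndMeas : ∀ k, Measurable (Bnd k) := by
    intro k
    have heq : Bnd k = fun s =>
        μ {x | h x ≤ m + s + (4:ℝ)⁻¹^(k+1)} - μ {x | h x ≤ m + s - (4:ℝ)⁻¹^(k+1)} := by
      funext s
      have hset : {x | m + s - (4:ℝ)⁻¹^(k+1) < h x ∧ h x ≤ m + s + (4:ℝ)⁻¹^(k+1)}
          = {x | h x ≤ m + s + (4:ℝ)⁻¹^(k+1)} \ {x | h x ≤ m + s - (4:ℝ)⁻¹^(k+1)} := by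
        ext x; simp only [mem_setOf_eq, mem_diff, not_le]; tauto
      show μ {x | m + s - (4:ℝ)⁻¹^(k+1) < h x ∧ h x ≤ m + s + (4:ℝ)⁻¹^(k+1)} = _
      rw [hset]
      refine measure_diff ?_ (measurableSet_le hm measurable_const).nullMeasurableSet
        (measure_ne_top μ _)
      intro x hx
      simp only [mem_setOf_eq] at hx ⊢
      linarith [hr_pos k]
    rw [heq]
    have hmono1 : Monotone (fun s : ℝ => μ {x | h x ≤ m + s + (4:ℝ)⁻¹^(k+1)}) := by
      intro s s' hss'
      refine measure_mono fun x hx => ?_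
      simp only [mem_setOf_eq] at hx ⊢
      linarith
    have hmono2 : Monotone (fun s : ℝ => μ {x | h x ≤ m + s - (4:ℝ)⁻¹^(k+1)}) := by
      intro s s' hss'
      refine measure_mono fun x hx => ?_
      simp only [mem_setOf_eq] at hx ⊢
      linarith
    exact hmono1.measurable.sub hmono2.measurable
  have hBle : ∀ k, ∫⁻ s in Ioc (0:ℝ) 2, Bnd k s ∂volume
      ≤ ENNReal.ofReal (2 * (4:ℝ)⁻¹^(k+1)) := by
    intro k
    set r : ℝ := (4:ℝ)⁻¹^(k+1) with hr_def
    have hS2 : MeasurableSet {p : ℝ × X | m + p.1 - r < h p.2 ∧ h p.2 ≤ m + p.1 + r} := by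
      refine (measurableSet_lt ((measurable_const.add measurable_fst).sub measurable_const)
        (hm.comp measurable_snd)).inter
        (measurableSet_le (hm.comp measurable_snd)
          ((measurable_const.add measurable_fst).add measurable_const))
    have h1 : ∫⁻ s in Ioc (0:ℝ) 2, Bnd k s ∂volume
        = (ν.prod μ) {p : ℝ × X | m + p.1 - r < h p.2 ∧ h p.2 ≤ m + p.1 + r} := by
      rw [Measure.prod_apply hS2]; rfl
    rw [h1, Measure.prod_apply_symm hS2]
    have h2 : ∀ x : X, ν ((fun s => (s, x)) ⁻¹' {p : ℝ × X | m + p.1 - r < h p.2 ∧ h p.2 ≤ m + p.1 + r})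
        ≤ ENNReal.ofReal (2 * r) := by
      intro x
      have hpre : ((fun s => (s, x)) ⁻¹' {p : ℝ × X | m + p.1 - r < h p.2 ∧ h p.2 ≤ m + p.1 + r})
          = Ico (h x - m - r) (h x - m + r) := by
        ext s; simp only [mem_preimage, mem_setOf_eq, mem_Ico]
        constructor <;> rintro ⟨h1, h2⟩ <;> constructor <;> linarith
      rw [hpre, hν_def, Measure.restrict_apply measurableSet_Ico]
      calc volume (Ico (h x - m - r) (h x - m + r) ∩ Ioc 0 2)
          ≤ volume (Ico (h x - m - r) (h x - m + r)) := measure_mono inter_subset_left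
        _ = ENNReal.ofReal (2 * r) := by rw [Real.volume_Ico]; congr 1; ring
    calc ∫⁻ x, ν ((fun s => (s, x)) ⁻¹' {p : ℝ × X | m + p.1 - r < h p.2 ∧ h p.2 ≤ m + p.1 + r}) ∂μ
        ≤ ∫⁻ _x, ENNReal.ofReal (2 * r) ∂μ := lintegral_mono h2
      _ = ENNReal.ofReal (2 * r) := by simp
  set Bad : ℕ → Set ℝ := fun k => {s | s ∈ Ioc (0:ℝ) 2 ∧
    ENNReal.ofReal (16/ε * (2:ℝ)⁻¹^k) < Bnd k s} with hBad_def
  have hrc : ∀ k : ℕ, 2 * (4:ℝ)⁻¹^(k+1) = (ε/32 * (2:ℝ)⁻¹^k) * (16/ε * (2:ℝ)⁻¹^k) := by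
    intro k
    have h4 : (4:ℝ)⁻¹ = 2⁻¹ * 2⁻¹ := by norm_num
    rw [h4, mul_pow]
    field_simp
    ring
  have hBadvol : ∀ k, volume (Bad k) ≤ ENNReal.ofReal (ε/32 * (2:ℝ)⁻¹^k) := by
    intro k
    have hc_pos : (0:ℝ) < 16/ε * (2:ℝ)⁻¹^k := by positivity
    have hmark : ENNReal.ofReal (16/ε * (2:ℝ)⁻¹^k) * volume (Bad k)
        ≤ ENNReal.ofReal (2 * (4:ℝ)⁻¹^(k+1)) := by
      calc ENNReal.ofReal (16/ε * (2:ℝ)⁻¹^k) * volume (Bad k)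
          = ∫⁻ _s in Bad k, ENNReal.ofReal (16/ε * (2:ℝ)⁻¹^k) ∂volume := by
            rw [setLIntegral_const]
        _ ≤ ∫⁻ s in Bad k, Bnd k s ∂volume :=
            setLIntegral_mono (hBndMeas k) (fun s hs => hs.2.le)
        _ ≤ ∫⁻ s in Ioc (0:ℝ) 2, Bnd k s ∂volume := lintegral_mono_set (fun s hs => hs.1)
        _ ≤ ENNReal.ofReal (2 * (4:ℝ)⁻¹^(k+1)) := hBle k
    have h2 : ENNReal.ofReal (2 * (4:ℝ)⁻¹^(k+1))
        = ENNReal.ofReal (ε/32 * (2:ℝ)⁻¹^k) * ENNReal.ofReal (16/ε * (2:ℝ)⁻¹^k) := by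
      rw [← ENNReal.ofReal_mul (by positivity)]
      congr 1
      exact hrc k
    rw [h2, mul_comm (ENNReal.ofReal (16/ε * (2:ℝ)⁻¹^k)) (volume (Bad k))] at hmark
    exact (ENNReal.mul_le_mul_iff_left (ENNReal.ofReal_pos.2 hc_pos).ne' ENNReal.ofReal_ne_top).1 hmark
  have hBadsum : volume (⋃ k, Bad k) ≤ ENNReal.ofReal (ε/16) := by
    have hsummable : Summable (fun k : ℕ => ε/32 * (2:ℝ)⁻¹^k) :=
      (summable_geometric_of_lt_one (by norm_num) (by norm_num)).mul_left _
    calc volume (⋃ k, Bad k) ≤ ∑' k, volume (Bad k) := measure_iUnion_le _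
      _ ≤ ∑' k, ENNReal.ofReal (ε/32 * (2:ℝ)⁻¹^k) := ENNReal.tsum_le_tsum hBadvol
      _ = ENNReal.ofReal (∑' k, ε/32 * (2:ℝ)⁻¹^k) :=
          (ENNReal.ofReal_tsum_of_nonneg (fun k => by positivity) hsummable).symm
      _ = ENNReal.ofReal (ε/16) := by
          congr 1
          rw [tsum_mul_left, tsum_geometric_of_lt_one (by norm_num) (by norm_num)]
          norm_num
          ring
  have hdiffpos : 0 < volume (G \ ⋃ k, Bad k) := by
    have h1 : ENNReal.ofReal (ε/8) - ENNReal.ofReal (ε/16) ≤ volume G - volume (⋃ k, Bad k) :=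
      tsub_le_tsub hGvol hBadsum
    rw [← ENNReal.ofReal_sub _ (by positivity), show ε/8 - ε/16 = ε/16 by ring] at h1
    calc (0:ENNReal) < ENNReal.ofReal (ε/16) := ENNReal.ofReal_pos.2 (by positivity)
      _ ≤ volume G - volume (⋃ k, Bad k) := h1
      _ ≤ volume (G \ ⋃ k, Bad k) := le_measure_diff
  obtain ⟨s₀, hs₀⟩ := nonempty_of_measure_ne_zero hdiffpos.ne'
  have hs₀G : s₀ ∈ G := hs₀.1
  refine ⟨m + s₀, hs₀G.2, ?_, ?_⟩
  · have hsub : {x | m + s₀ < h x} ⊆ {x | h x ≤ m}ᶜ := by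
      intro x hx
      simp only [mem_compl_iff, mem_setOf_eq, not_le] at *
      have hs0 : 0 < s₀ := hs₀G.1.1
      linarith
    calc μ {x | m + s₀ < h x} ≤ μ ({x | h x ≤ m}ᶜ) := measure_mono hsub
      _ = 1 - μ {x | h x ≤ m} := prob_compl_eq_one_sub hSmeas
      _ ≤ 1 - ENNReal.ofReal (ε/8) := tsub_le_tsub_left hS 1
  · intro k
    have hnk : s₀ ∉ Bad k := fun hk => hs₀.2 (mem_iUnion.2 ⟨k, hk⟩)
    have : ¬ ENNReal.ofReal (16/ε * (2:ℝ)⁻¹^k) < Bnd k s₀ := fun hlt => hnk ⟨hs₀G.1, hlt⟩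
    exact not_lt.1 this

lemma real_main {X : Type*} [MeasurableSpace X]
    (μ : Measure X) [IsProbabilityMeasure μ]
    (R : X → X → Prop) (hR : Equivalence R)
    (hSE : ∀ E : ℕ → Set X, (∀ n, MeasurableSet (E n)) →
      (∀ φ : X ≃ X, IsFullGroupElement R φ →
        Tendsto (fun n => μ (E n \ φ '' E n)) atTop (𝓝 0)) →
      Tendsto (fun n => μ (E n) * (1 - μ (E n))) atTop (𝓝 0))
    (g : ℕ → X → ℝ) (hgm : ∀ n, Measurable (g n)) (hgb : ∀ n x, -1 ≤ g n x ∧ g n x ≤ 1)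
    (hconv : ∀ φ : X ≃ X, IsFullGroupElement R φ →
      Tendsto (fun n => ∫ x, (g n (φ x) - g n x) ^ 2 ∂μ) atTop (𝓝 0))
    {ε : ℝ} (hε : 0 < ε) (hε1 : ε ≤ 1)
    (hvar : ∀ n, ε ≤ ∫ x, (g n x - ∫ y, g n y ∂μ) ^ 2 ∂μ) : False := by
  choose t ht1 ht2 ht3 using fun n => exists_good_cut μ (g n) (hgm n) (hgb n) hε (hvar n)
  set E : ℕ → Set X := fun n => {x | t n < g n x} with hE_def
  have hEm : ∀ n, MeasurableSet (E n) := fun n => measurableSet_lt measurable_const (hgm n)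
  have hInv : ∀ φ : X ≃ X, IsFullGroupElement R φ →
      Tendsto (fun n => μ (E n \ φ '' E n)) atTop (𝓝 0) := by
    intro φ hφ
    have hψ : IsFullGroupElement R φ.symm := by
      refine ⟨hφ.2.1, by simpa using hφ.1, fun x => ?_⟩
      have h1 := hφ.2.2 (φ.symm x)
      rw [Equiv.apply_symm_apply] at h1
      exact hR.symm h1
    have hc := hconv φ.symm hψ
    have hdm : ∀ n, Measurable (fun x => g n (φ.symm x) - g n x) :=
      fun n => ((hgm n).comp hφ.2.1).sub (hgm n)
    have key : ∀ n (k : ℕ), μ (E n \ φ '' E n)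
        ≤ ENNReal.ofReal (∫ x, (g n (φ.symm x) - g n x) ^ 2 ∂μ)
            / ENNReal.ofReal (((4:ℝ)⁻¹ ^ (k+1)) ^ 2)
          + ENNReal.ofReal (16 / ε * (2:ℝ)⁻¹ ^ k) := by
      intro n k
      set r : ℝ := (4:ℝ)⁻¹ ^ (k+1) with hr_def
      have hr : (0:ℝ) < r := by positivity
      set C : Set X := {x | r ≤ |g n (φ.symm x) - g n x|} with hC_def
      set B : Set X := {x | t n - r < g n x ∧ g n x ≤ t n + r} with hB_def
      have hsub : E n \ φ '' E n ⊆ C ∪ B := by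
        intro x hx
        obtain ⟨hx1, hx2⟩ := hx
        rw [Equiv.image_eq_preimage_symm] at hx2
        have hx1' : t n < g n x := hx1
        have hx2' : g n (φ.symm x) ≤ t n := not_lt.1 hx2
        by_cases hcC : r ≤ |g n (φ.symm x) - g n x|
        · exact Or.inl hcC
        · right
          rcases abs_lt.1 (not_le.1 hcC) with ⟨hl, hu⟩
          exact ⟨by linarith, by linarith⟩
      have hCm : MeasurableSet C := measurableSet_le measurable_const (hdm n).abs
      have hCb : μ C ≤ ENNReal.ofReal (∫ x, (g n (φ.symm x) - g n x) ^ 2 ∂μ)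
          / ENNReal.ofReal (r ^ 2) := by
        have hmark : ENNReal.ofReal (r ^ 2) * μ C
            ≤ ENNReal.ofReal (∫ x, (g n (φ.symm x) - g n x) ^ 2 ∂μ) := by
          calc ENNReal.ofReal (r ^ 2) * μ C
              = ∫⁻ _x in C, ENNReal.ofReal (r ^ 2) ∂μ := by rw [setLIntegral_const]
            _ ≤ ∫⁻ x in C, ENNReal.ofReal ((g n (φ.symm x) - g n x) ^ 2) ∂μ := by
                refine setLIntegral_mono (ENNReal.measurable_ofReal.comp ((hdm n).pow_const 2))
                  fun x hx => ENNReal.ofReal_le_ofReal ?_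
                have hx' : r ≤ |g n (φ.symm x) - g n x| := hx
                calc r ^ 2 ≤ |g n (φ.symm x) - g n x| ^ 2 := by
                      exact pow_le_pow_left₀ hr.le hx' 2
                  _ = (g n (φ.symm x) - g n x) ^ 2 := sq_abs _
            _ ≤ ∫⁻ x, ENNReal.ofReal ((g n (φ.symm x) - g n x) ^ 2) ∂μ :=
                setLIntegral_le_lintegral _ _
            _ = ENNReal.ofReal (∫ x, (g n (φ.symm x) - g n x) ^ 2 ∂μ) := by
                refine (ofReal_integral_eq_lintegral_ofReal ?_
                  (ae_of_all _ fun x => sq_nonneg _)).symm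
                refine ⟨((hdm n).pow_const 2).aestronglyMeasurable,
                  HasFiniteIntegral.of_bounded (C := 4) (ae_of_all _ fun x => ?_)⟩
                have h1 := hgb n (φ.symm x)
                have h2 := hgb n x
                rw [Real.norm_eq_abs, abs_le]
                constructor <;> nlinarith
        rw [ENNReal.le_div_iff_mul_le (Or.inl (ENNReal.ofReal_pos.2 (by positivity)).ne')
          (Or.inl ENNReal.ofReal_ne_top), mul_comm]
        exact hmark
      calc μ (E n \ φ '' E n) ≤ μ (C ∪ B) := measure_mono hsub
        _ ≤ μ C + μ B := measure_union_le _ _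
        _ ≤ _ := add_le_add hCb (ht3 n k)
    rw [ENNReal.tendsto_nhds_zero]
    intro δ hδ
    rcases eq_or_ne δ ⊤ with hδt | hδt
    · filter_upwards with n
      rw [hδt]
      exact le_top
    have hb : 0 < δ.toReal := ENNReal.toReal_pos hδ.ne' hδt
    have htnd : Tendsto (fun k : ℕ => 16 / ε * (2:ℝ)⁻¹ ^ k) atTop (𝓝 0) := by
      have := (tendsto_pow_atTop_nhds_zero_of_lt_one (by norm_num : (0:ℝ) ≤ 2⁻¹)
        (by norm_num : (2:ℝ)⁻¹ < 1)).const_mul (16 / ε)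
      simpa using this
    obtain ⟨K, hK⟩ := (htnd.eventually (eventually_le_nhds (half_pos hb))).exists
    set r : ℝ := (4:ℝ)⁻¹ ^ (K+1) with hr_def
    have hr : (0:ℝ) < r := by positivity
    have hev : ∀ᶠ n in atTop, ∫ x, (g n (φ.symm x) - g n x) ^ 2 ∂μ ≤ δ.toReal / 2 * r ^ 2 :=
      hc.eventually (eventually_le_nhds (by positivity))
    filter_upwards [hev] with n hn
    calc μ (E n \ φ '' E n)
        ≤ ENNReal.ofReal (∫ x, (g n (φ.symm x) - g n x) ^ 2 ∂μ) / ENNReal.ofReal (r ^ 2)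
          + ENNReal.ofReal (16 / ε * (2:ℝ)⁻¹ ^ K) := key n K
      _ ≤ ENNReal.ofReal (δ.toReal / 2 * r ^ 2) / ENNReal.ofReal (r ^ 2)
          + ENNReal.ofReal (δ.toReal / 2) := by
          exact add_le_add (ENNReal.div_le_div_right (ENNReal.ofReal_le_ofReal hn) _)
            (ENNReal.ofReal_le_ofReal hK)
      _ ≤ ENNReal.ofReal (δ.toReal / 2) + ENNReal.ofReal (δ.toReal / 2) := by
          refine add_le_add_left ?_ _
          rw [ENNReal.ofReal_mul (by positivity), mul_div_assoc]
          calc ENNReal.ofReal (δ.toReal / 2) * (ENNReal.ofReal (r ^ 2) / ENNReal.ofReal (r ^ 2))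
              ≤ ENNReal.ofReal (δ.toReal / 2) * 1 :=
                mul_le_mul_right ENNReal.div_self_le_one _
            _ = ENNReal.ofReal (δ.toReal / 2) := mul_one _
      _ = δ := by
          rw [← ENNReal.ofReal_add (by positivity) (by positivity)]
          rw [show δ.toReal / 2 + δ.toReal / 2 = δ.toReal by ring]
          exact ENNReal.ofReal_toReal hδt
  have htend := hSE E hEm hInv
  have hlow : ∀ n, ENNReal.ofReal (ε / 16 * (ε / 8)) ≤ μ (E n) * (1 - μ (E n)) := by
    intro n
    rw [ENNReal.ofReal_mul (by positivity)]
    refine mul_le_mul' (ht1 n) ?_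
    have h18 : ENNReal.ofReal (ε / 8) ≤ 1 := ENNReal.ofReal_le_one.2 (by linarith)
    calc ENNReal.ofReal (ε / 8) = 1 - (1 - ENNReal.ofReal (ε / 8)) :=
        (ENNReal.sub_sub_cancel ENNReal.one_ne_top h18).symm
      _ ≤ 1 - μ (E n) := tsub_le_tsub_left (ht2 n) 1
  have hpos : (0:ENNReal) < ENNReal.ofReal (ε / 16 * (ε / 8)) :=
    ENNReal.ofReal_pos.2 (by positivity)
  obtain ⟨n, hn⟩ := (htend.eventually (eventually_lt_nhds hpos)).exists
  exact absurd (hlow n) (not_le.2 hn)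

lemma real_reduction {X : Type*} [MeasurableSpace X]
    (μ : Measure X) [IsProbabilityMeasure μ]
    (R : X → X → Prop) (hR : Equivalence R)
    (hpmp : ∀ φ : X ≃ X, IsFullGroupElement R φ → MeasurePreserving φ μ μ)
    (hSE : ∀ E : ℕ → Set X, (∀ n, MeasurableSet (E n)) →
      (∀ φ : X ≃ X, IsFullGroupElement R φ →
        Tendsto (fun n => μ (E n \ φ '' E n)) atTop (𝓝 0)) →
      Tendsto (fun n => μ (E n) * (1 - μ (E n))) atTop (𝓝 0))
    (g : ℕ → X → ℝ) (hgm : ∀ n, Measurable (g n))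
    (hgb : ∀ n, ∀ᵐ x ∂μ, |g n x| ≤ 1)
    (hconv : ∀ φ : X ≃ X, IsFullGroupElement R φ →
      Tendsto (fun n => ∫ x, (g n (φ x) - g n x) ^ 2 ∂μ) atTop (𝓝 0))
    {ε : ℝ} (hε : 0 < ε) (hε1 : ε ≤ 1)
    (hfreq : ∃ᶠ n in atTop, ε ≤ ∫ x, (g n x - ∫ y, g n y ∂μ) ^ 2 ∂μ) : False := by
  obtain ⟨ns, hns_mono, hns⟩ := Filter.extraction_of_frequently_atTop hfreq
  set g' : ℕ → X → ℝ := fun j x => max (-1) (min 1 (g (ns j) x)) with hg'_def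
  have hg'm : ∀ j, Measurable (g' j) :=
    fun j => measurable_const.max (measurable_const.min (hgm (ns j)))
  have hg'b : ∀ j x, -1 ≤ g' j x ∧ g' j x ≤ 1 := fun j x =>
    ⟨le_max_left _ _, max_le (by norm_num) (min_le_left _ _)⟩
  have hae : ∀ j, g (ns j) =ᵐ[μ] g' j := by
    intro j
    filter_upwards [hgb (ns j)] with x hx
    rw [abs_le] at hx
    simp only [hg'_def]
    rw [min_eq_right hx.2, max_eq_right hx.1]
  -- transfer of a.e. equality through a measure preserving φ
  have haeφ : ∀ (φ : X ≃ X), IsFullGroupElement R φ → ∀ j,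
      (fun x => g (ns j) (φ x)) =ᵐ[μ] (fun x => g' j (φ x)) := by
    intro φ hφ j
    have h0 : μ {y | ¬ g (ns j) y = g' j y} = 0 := hae j
    have hmeas : MeasurableSet {y | ¬ g (ns j) y = g' j y} :=
      ((measurableSet_eq_fun (hgm (ns j)) (hg'm j))).compl
    have hpre : {x | ¬ g (ns j) (φ x) = g' j (φ x)} = φ ⁻¹' {y | ¬ g (ns j) y = g' j y} := rfl
    show μ {x | ¬ g (ns j) (φ x) = g' j (φ x)} = 0
    rw [hpre, (hpmp φ hφ).measure_preimage hmeas.nullMeasurableSet]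
    exact h0
  have hvar' : ∀ j, ε ≤ ∫ x, (g' j x - ∫ y, g' j y ∂μ) ^ 2 ∂μ := by
    intro j
    have hm' : ∫ y, g' j y ∂μ = ∫ y, g (ns j) y ∂μ := integral_congr_ae (hae j).symm
    have hint : ∫ x, (g' j x - ∫ y, g' j y ∂μ) ^ 2 ∂μ
        = ∫ x, (g (ns j) x - ∫ y, g (ns j) y ∂μ) ^ 2 ∂μ := by
      rw [hm']
      refine integral_congr_ae ?_
      filter_upwards [hae j] with x hx
      rw [hx]
    rw [hint]
    exact hns j
  have hconv' : ∀ φ : X ≃ X, IsFullGroupElement R φ →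
      Tendsto (fun j => ∫ x, (g' j (φ x) - g' j x) ^ 2 ∂μ) atTop (𝓝 0) := by
    intro φ hφ
    have hcomp : ∀ j, ∫ x, (g' j (φ x) - g' j x) ^ 2 ∂μ
        = ∫ x, (g (ns j) (φ x) - g (ns j) x) ^ 2 ∂μ := by
      intro j
      refine integral_congr_ae ?_
      filter_upwards [hae j, haeφ φ hφ j] with x hx1 hx2
      rw [← hx1, ← hx2]
    have hbase : Tendsto (fun j => ∫ x, (g (ns j) (φ x) - g (ns j) x) ^ 2 ∂μ) atTop (𝓝 0) :=
      (hconv φ hφ).comp hns_mono.tendsto_atTop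
    exact hbase.congr fun j => (hcomp j).symm
  exact real_main μ R hR hSE g' hg'm hg'b hconv' hε hε1 hvar'

/-- Let `R` be a strongly ergodic countable pmp equivalence relation on a standard Borel
probability space `(X, μ)`.  Then for any sequence of measurable functions `fₙ : X → ℂ` with
`|fₙ| ≤ 1` a.e. and `∫ |fₙ ∘ φ − fₙ|² dμ → 0` for every `φ ∈ [R]`, one has
`∫ |fₙ − ∫ fₙ dμ|² dμ → 0`. -/
theorem strongly_ergodic_asymptotically_invariant_functions
    {X : Type*} [MeasurableSpace X] [StandardBorelSpace X]
    (μ : Measure X) [IsProbabilityMeasure μ]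
    -- R is a countable pmp equivalence relation with measurable graph
    (R : X → X → Prop) (hR : Equivalence R)
    (hgraph : MeasurableSet {p : X × X | R p.1 p.2})
    (hcount : ∀ x, {y | R x y}.Countable)
    (hpmp : ∀ φ : X ≃ X, IsFullGroupElement R φ → MeasurePreserving φ μ μ)
    -- R is strongly ergodic
    (hSE : ∀ E : ℕ → Set X, (∀ n, MeasurableSet (E n)) →
      (∀ φ : X ≃ X, IsFullGroupElement R φ →
        Tendsto (fun n => μ (E n \ φ '' E n)) atTop (𝓝 0)) →
      Tendsto (fun n => μ (E n) * (1 - μ (E n))) atTop (𝓝 0)) :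
    ∀ f : ℕ → X → ℂ, (∀ n, Measurable (f n)) → (∀ n, ∀ᵐ x ∂μ, ‖f n x‖ ≤ 1) →
      (∀ φ : X ≃ X, IsFullGroupElement R φ →
        Tendsto (fun n => ∫ x, ‖f n (φ x) - f n x‖ ^ 2 ∂μ) atTop (𝓝 0)) →
      Tendsto (fun n => ∫ x, ‖f n x - ∫ y, f n y ∂μ‖ ^ 2 ∂μ) atTop (𝓝 0) := by
  intro f hfm hfb hfconv
  by_contra hnot
  set V : ℕ → ℝ := fun n => ∫ x, ‖f n x - ∫ y, f n y ∂μ‖ ^ 2 ∂μ with hV_def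
  have hVnn : ∀ n, 0 ≤ V n := fun n => integral_nonneg fun x => by positivity
  -- extract ε with frequently ε ≤ V n
  obtain ⟨ε0, hε0, hfreqV⟩ : ∃ ε0 > 0, ∃ᶠ n in atTop, ε0 ≤ V n := by
    by_contra hcon
    push_neg at hcon
    apply hnot
    refine tendsto_order.2 ⟨fun a ha => ?_, fun a ha => ?_⟩
    · exact Filter.Eventually.of_forall fun n => lt_of_lt_of_le ha (hVnn n)
    · have h1 := hcon a ha
      exact h1
  -- integrability facts
  have hInt : ∀ n, Integrable (f n) μ := fun n =>
    ⟨(hfm n).aestronglyMeasurable, HasFiniteIntegral.of_bounded (hfb n)⟩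
  have hcb : ∀ n, ‖∫ y, f n y ∂μ‖ ≤ 1 := by
    intro n
    have := norm_integral_le_of_norm_le_const (μ := μ) (f := f n) (C := 1) (hfb n)
    simpa using this
  -- split into re and im variance parts
  set P : ℕ → ℝ := fun n => ∫ x, ((f n x).re - ∫ y, (f n y).re ∂μ) ^ 2 ∂μ with hP_def
  set Q : ℕ → ℝ := fun n => ∫ x, ((f n x).im - ∫ y, (f n y).im ∂μ) ^ 2 ∂μ with hQ_def
  have hre : ∀ n, ∫ y, (f n y).re ∂μ = (∫ y, f n y ∂μ).re := by
    intro n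
    have := integral_re (μ := μ) (f := f n) (hInt n)
    simpa using this
  have him : ∀ n, ∫ y, (f n y).im ∂μ = (∫ y, f n y ∂μ).im := by
    intro n
    have := integral_im (μ := μ) (f := f n) (hInt n)
    simpa using this
  have hsplit : ∀ n, V n = P n + Q n := by
    intro n
    have hpt : ∀ x, ‖f n x - ∫ y, f n y ∂μ‖ ^ 2
        = ((f n x).re - ∫ y, (f n y).re ∂μ) ^ 2 + ((f n x).im - ∫ y, (f n y).im ∂μ) ^ 2 := by
      intro x
      rw [hre n, him n]
      rw [← Complex.sub_re, ← Complex.sub_im]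
      rw [Complex.sq_norm, Complex.normSq_apply]
      ring
    have hintre : Integrable (fun x => ((f n x).re - ∫ y, (f n y).re ∂μ) ^ 2) μ := by
      refine ⟨((Complex.measurable_re.comp (hfm n)).sub measurable_const).pow_const 2
        |>.aestronglyMeasurable, HasFiniteIntegral.of_bounded (C := 4) ?_⟩
      filter_upwards [hfb n] with x hx
      rw [hre n]
      have h1 : |(f n x).re| ≤ 1 := le_trans (Complex.abs_re_le_norm _) hx
      have h2 : |(∫ y, f n y ∂μ).re| ≤ 1 := le_trans (Complex.abs_re_le_norm _) (hcb n)
      rw [abs_le] at h1 h2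
      rw [Real.norm_eq_abs, abs_le]
      constructor <;> nlinarith
    have hintim : Integrable (fun x => ((f n x).im - ∫ y, (f n y).im ∂μ) ^ 2) μ := by
      refine ⟨((Complex.measurable_im.comp (hfm n)).sub measurable_const).pow_const 2
        |>.aestronglyMeasurable, HasFiniteIntegral.of_bounded (C := 4) ?_⟩
      filter_upwards [hfb n] with x hx
      rw [him n]
      have h1 : |(f n x).im| ≤ 1 := le_trans (Complex.abs_im_le_norm _) hx
      have h2 : |(∫ y, f n y ∂μ).im| ≤ 1 := le_trans (Complex.abs_im_le_norm _) (hcb n)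
      rw [abs_le] at h1 h2
      rw [Real.norm_eq_abs, abs_le]
      constructor <;> nlinarith
    calc V n = ∫ x, (((f n x).re - ∫ y, (f n y).re ∂μ) ^ 2
          + ((f n x).im - ∫ y, (f n y).im ∂μ) ^ 2) ∂μ := by
          rw [hV_def]
          exact integral_congr_ae (ae_of_all _ hpt)
      _ = P n + Q n := integral_add hintre hintim
  -- frequently, the re or the im part has variance at least ε0/2
  have hfreq2 : (∃ᶠ n in atTop, ε0/2 ≤ P n) ∨ (∃ᶠ n in atTop, ε0/2 ≤ Q n) := by
    rw [← Filter.frequently_or_distrib]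
    refine hfreqV.mono fun n hn => ?_
    by_contra hcon
    push_neg at hcon
    have := hsplit n
    linarith [hcon.1, hcon.2]
  -- the conv hypothesis for components
  have hcompconv : ∀ (u : ℂ → ℝ), (∀ z : ℂ, |u z| ≤ ‖z‖) → (∀ z w : ℂ, u (z - w) = u z - u w) →
      Measurable u →
      ∀ φ : X ≃ X, IsFullGroupElement R φ →
      Tendsto (fun n => ∫ x, (u (f n (φ x)) - u (f n x)) ^ 2 ∂μ) atTop (𝓝 0) := by
    intro u hu hsub hum φ hφ
    have hbφ : ∀ n, ∀ᵐ x ∂μ, ‖f n (φ x)‖ ≤ 1 := by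
      intro n
      have h0 : μ {y | ¬ ‖f n y‖ ≤ 1} = 0 := hfb n
      have hmeas : MeasurableSet {y | ¬ ‖f n y‖ ≤ 1} :=
        (measurableSet_le ((hfm n).norm) measurable_const).compl
      show μ {x | ¬ ‖f n (φ x)‖ ≤ 1} = 0
      have hpre : {x | ¬ ‖f n (φ x)‖ ≤ 1} = φ ⁻¹' {y | ¬ ‖f n y‖ ≤ 1} := rfl
      rw [hpre, (hpmp φ hφ).measure_preimage hmeas.nullMeasurableSet]
      exact h0
    have hnn : ∀ n, 0 ≤ ∫ x, (u (f n (φ x)) - u (f n x)) ^ 2 ∂μ :=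
      fun n => integral_nonneg fun x => sq_nonneg _
    have hle : ∀ n, ∫ x, (u (f n (φ x)) - u (f n x)) ^ 2 ∂μ
        ≤ ∫ x, ‖f n (φ x) - f n x‖ ^ 2 ∂μ := by
      intro n
      have hptle : ∀ x, (u (f n (φ x)) - u (f n x)) ^ 2 ≤ ‖f n (φ x) - f n x‖ ^ 2 := by
        intro x
        rw [← hsub]
        calc (u (f n (φ x) - f n x)) ^ 2 = |u (f n (φ x) - f n x)| ^ 2 := (sq_abs _).symm
          _ ≤ ‖f n (φ x) - f n x‖ ^ 2 := by
              have := hu (f n (φ x) - f n x)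
              nlinarith [abs_nonneg (u (f n (φ x) - f n x)), norm_nonneg (f n (φ x) - f n x)]
      refine integral_mono ?_ ?_ hptle
      · refine ⟨((hum.comp ((hfm n).comp hφ.1)).sub (hum.comp (hfm n))).pow_const 2
          |>.aestronglyMeasurable, HasFiniteIntegral.of_bounded (C := 4) ?_⟩
        filter_upwards [hfb n, hbφ n] with x hx1 hx2
        have h1 : |u (f n (φ x))| ≤ 1 := le_trans (hu _) hx2
        have h2 : |u (f n x)| ≤ 1 := le_trans (hu _) hx1
        rw [abs_le] at h1 h2
        rw [Real.norm_eq_abs, abs_le]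
        constructor <;> nlinarith
      · refine ⟨(((hfm n).comp hφ.1).sub (hfm n)).norm.pow_const 2
          |>.aestronglyMeasurable, HasFiniteIntegral.of_bounded (C := 4) ?_⟩
        filter_upwards [hfb n, hbφ n] with x hx1 hx2
        have h3 : ‖f n (φ x) - f n x‖ ≤ 2 := le_trans (norm_sub_le _ _) (by linarith)
        rw [Real.norm_eq_abs, abs_le]
        constructor <;> nlinarith [norm_nonneg (f n (φ x) - f n x)]
    exact squeeze_zero hnn hle (hfconv φ hφ)
  -- apply the real reduction to the appropriate component
  rcases hfreq2 with hfr | hfr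
  · refine real_reduction μ R hR hpmp hSE (fun n x => (f n x).re)
      (fun n => Complex.measurable_re.comp (hfm n))
      (fun n => (hfb n).mono fun x hx => le_trans (Complex.abs_re_le_norm _) hx)
      (hcompconv (fun z => z.re) (fun z => Complex.abs_re_le_norm z)
        (fun z w => Complex.sub_re z w) Complex.measurable_re)
      (lt_min (half_pos hε0) one_pos) (min_le_right _ _) ?_
    refine hfr.mono fun n hn => le_trans (min_le_left _ _) ?_
    rwa [hP_def] at hn
  · refine real_reduction μ R hR hpmp hSE (fun n x => (f n x).im)
      (fun n => Complex.measurable_im.comp (hfm n))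
      (fun n => (hfb n).mono fun x hx => le_trans (Complex.abs_im_le_norm _) hx)
      (hcompconv (fun z => z.im) (fun z => Complex.abs_im_le_norm z)
        (fun z w => Complex.sub_im z w) Complex.measurable_im)
      (lt_min (half_pos hε0) one_pos) (min_le_right _ _) ?_
    refine hfr.mono fun n hn => le_trans (min_le_left _ _) ?_
    rwa [hQ_def] at hn
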